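/- Let (X,φ,G) and (Y,ψ,G) be topological dynamical systems given by continuous actions of a countable group G on compact metric spaces, let π:X→Y be a factor map, let ν be an invariant Borel probability measure of (Y,ψ,G), and let μ be the invariant probability measure on the sigma-algebra π⁻¹β(Y)={π⁻¹(A) : A∈β(Y)} defined by μ(π⁻¹(A))=ν(A). If ν({y∈Y : |π⁻¹{y}|>1})=0, then μ extends to a unique invariant Borel probability measure on X. -/

import Mathlib

open MeasureTheory Set

/-- Auxiliary uniqueness lemma: any two probability measures on `X` pushing forward to `ν`
under the a.e.-injective map `π` coincide. -/
theorem statement6_uniq_aux {X : Type*} [MetricSpace X] [CompactSpace X] [MeasurableSpace X]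
    [BorelSpace X]
    {Y : Type*} [MetricSpace Y] [CompactSpace Y] [MeasurableSpace Y] [BorelSpace Y]
    (π : X → Y) (hπcont : Continuous π)
    (ν : Measure Y) [IsProbabilityMeasure ν]
    (hsingle : ν {y : Y | (π ⁻¹' {y}).Nontrivial} = 0)
    (μ₁ μ₂ : Measure X) [IsProbabilityMeasure μ₁] [IsProbabilityMeasure μ₂]
    (h1 : ∀ A : Set Y, MeasurableSet A → μ₁ (π ⁻¹' A) = ν A)
    (h2 : ∀ A : Set Y, MeasurableSet A → μ₂ (π ⁻¹' A) = ν A) : μ₁ = μ₂ := by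
  set N := toMeasurable ν {y : Y | (π ⁻¹' {y}).Nontrivial} with hNdef
  have hNmeas : MeasurableSet N := measurableSet_toMeasurable _ _
  have hNnull : ν N = 0 := by rw [measure_toMeasurable]; exact hsingle
  have key : ∀ μ : Measure X, (∀ A : Set Y, MeasurableSet A → μ (π ⁻¹' A) = ν A) →
      ∀ K : Set X, IsClosed K → μ K = ν (π '' K) := by
    intro μ hμ K hK
    have hKc : IsCompact (π '' K) := (hK.isCompact).image hπcont
    have hKm : MeasurableSet (π '' K) := hKc.isClosed.measurableSet
    have hsub : π ⁻¹' (π '' K) \ K ⊆ π ⁻¹' N := by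
      rintro x ⟨⟨k, hk, hkx⟩, hxK⟩
      exact subset_toMeasurable ν _ ⟨k, by simp [hkx], x, rfl, fun h => hxK (h ▸ hk)⟩
    have hnull : μ (π ⁻¹' (π '' K) \ K) = 0 := by
      refine le_antisymm (le_trans (measure_mono hsub) ?_) zero_le
      rw [hμ N hNmeas, hNnull]
    have heq : μ (π ⁻¹' (π '' K)) = μ K := by
      refine le_antisymm ?_ (measure_mono (subset_preimage_image π K))
      calc μ (π ⁻¹' (π '' K)) ≤ μ (K ∪ (π ⁻¹' (π '' K) \ K)) :=
            measure_mono (fun x hx => by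
              by_cases h : x ∈ K
              · exact Or.inl h
              · exact Or.inr ⟨hx, h⟩)
        _ ≤ μ K + μ (π ⁻¹' (π '' K) \ K) := measure_union_le _ _
        _ = μ K := by rw [hnull, add_zero]
    rw [← heq, hμ _ hKm]
  refine ext_of_generate_finite {s : Set X | IsClosed s} ?_ ?_ ?_ ?_
  · borelize X
    exact borel_eq_generateFrom_isClosed
  · exact fun s hs t ht _ => hs.inter ht
  · intro s hs
    rw [key μ₁ h1 s hs, key μ₂ h2 s hs]
  · simp [measure_univ]

/-- Let `(X, φ, G)` and `(Y, ψ, G)` be topological dynamical systems given by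
continuous actions of a countable group `G` on compact metric spaces, let `π : X → Y` be a
factor map, let `ν` be an invariant Borel probability measure of `(Y, ψ, G)`, and let `μ` be
the invariant probability measure on the sigma-algebra `π⁻¹ β(Y)` defined by
`μ(π⁻¹ A) = ν(A)`. If `ν({y : |π⁻¹{y}| > 1}) = 0`, then `μ` extends to a unique invariant
Borel probability measure on `X` — i.e. there is a unique invariant Borel probability measure
`μ'` on `X` with `μ'(π⁻¹ A) = ν(A)` for every Borel set `A ⊆ Y`. -/
theorem statement6 {G : Type*} [Group G] [Countable G]
    {X : Type*} [MetricSpace X] [CompactSpace X] [MeasurableSpace X] [BorelSpace X]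
    {Y : Type*} [MetricSpace Y] [CompactSpace Y] [MeasurableSpace Y] [BorelSpace Y]
    (φ : G → X → X) (hφcont : ∀ g, Continuous (φ g))
    (hφone : ∀ x, φ 1 x = x) (hφmul : ∀ g h x, φ (g * h) x = φ g (φ h x))
    (ψ : G → Y → Y) (hψcont : ∀ g, Continuous (ψ g))
    (hψone : ∀ y, ψ 1 y = y) (hψmul : ∀ g h y, ψ (g * h) y = ψ g (ψ h y))
    (π : X → Y) (hπcont : Continuous π) (hπsurj : Function.Surjective π)
    (hπequiv : ∀ (g : G) (x : X), π (φ g x) = ψ g (π x))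
    (ν : Measure Y) [IsProbabilityMeasure ν] (hνinv : ∀ g : G, Measure.map (ψ g) ν = ν)
    (hsingle : ν {y : Y | (π ⁻¹' {y}).Nontrivial} = 0) :
    ∃! μ' : Measure X, IsProbabilityMeasure μ' ∧
      (∀ g : G, Measure.map (φ g) μ' = μ') ∧
      ∀ A : Set Y, MeasurableSet A → μ' (π ⁻¹' A) = ν A := by
  -- the measurable hull of the set of points with nontrivial fiber
  set N := toMeasurable ν {y : Y | (π ⁻¹' {y}).Nontrivial} with hNdef
  have hNmeas : MeasurableSet N := measurableSet_toMeasurable _ _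
  have hNnull : ν N = 0 := by rw [measure_toMeasurable]; exact hsingle
  -- the measurable set on which `π` is injective
  have hX₀meas : MeasurableSet (π ⁻¹' Nᶜ) := hπcont.measurable hNmeas.compl
  haveI : StandardBorelSpace (π ⁻¹' Nᶜ) := hX₀meas.standardBorel
  set e : (π ⁻¹' Nᶜ) → Y := fun x => π x.val with hedef
  have he_meas : Measurable e := (hπcont.measurable).comp measurable_subtype_coe
  have he_inj : Function.Injective e := by
    rintro ⟨x, hx⟩ ⟨x', hx'⟩ h
    have hxx : x = x' := by
      by_contra hne
      exact hx (subset_toMeasurable ν _ ⟨x, rfl, x', h.symm, hne⟩)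
    exact Subtype.ext hxx
  have hemb : MeasurableEmbedding e := he_meas.measurableEmbedding he_inj
  have hrange : Set.range e = Nᶜ := by
    ext y
    constructor
    · rintro ⟨⟨x, hx⟩, rfl⟩; exact hx
    · intro hy
      obtain ⟨x, rfl⟩ := hπsurj y
      exact ⟨⟨x, hy⟩, rfl⟩
  have hcomap : ∀ s : Set (π ⁻¹' Nᶜ), MeasurableSet s → Measure.comap e ν s = ν (e '' s) :=
    fun s hs => Measure.comap_apply e he_inj (fun t ht => hemb.measurableSet_image.2 ht) ν hs
  set μ' : Measure X := Measure.map Subtype.val (Measure.comap e ν) with hμ'def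
  have hprop : ∀ A : Set Y, MeasurableSet A → μ' (π ⁻¹' A) = ν A := by
    intro A hA
    have h1 : μ' (π ⁻¹' A) = Measure.comap e ν (e ⁻¹' A) := by
      rw [hμ'def, Measure.map_apply measurable_subtype_coe (hπcont.measurable hA)]
      rfl
    rw [h1, hcomap _ (he_meas hA), Set.image_preimage_eq_inter_range, hrange]
    have : A ∩ Nᶜ = A \ N := rfl
    rw [this, measure_diff_null hNnull]
  haveI hμ'prob : IsProbabilityMeasure μ' := by
    constructor
    have := hprop Set.univ MeasurableSet.univ
    simpa using this
  have hinv : ∀ g : G, Measure.map (φ g) μ' = μ' := by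
    intro g
    haveI : IsProbabilityMeasure (Measure.map (φ g) μ') :=
      Measure.isProbabilityMeasure_map (hφcont g).measurable.aemeasurable
    refine statement6_uniq_aux π hπcont ν hsingle _ _ ?_ hprop
    intro A hA
    rw [Measure.map_apply (hφcont g).measurable (hπcont.measurable hA)]
    have hset : φ g ⁻¹' (π ⁻¹' A) = π ⁻¹' (ψ g ⁻¹' A) := by
      ext x; simp [hπequiv g x]
    rw [hset, hprop _ ((hψcont g).measurable hA),
      ← Measure.map_apply (hψcont g).measurable hA, hνinv g]
  refine ⟨μ', ⟨hμ'prob, hinv, hprop⟩, ?_⟩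
  rintro μ₂ ⟨h2prob, _, h2prop⟩
  exact statement6_uniq_aux π hπcont ν hsingle μ₂ μ' h2prop hprop
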